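/- Let P be an s–t path in a graph G = (V,E) and let F ⊆ E \ E(P) be an inclusion-minimal edge set such that P ∪ F contains two internally node-disjoint s–t paths. Then every node v ∈ V \ V(P) has degree 0 or 2 in F, and consequently F partitions into 'attachment paths', i.e., paths whose endpoints lie on P but whose internal nodes are disjoint from P. -/

import Mathlib

open SimpleGraph

def TwoDisjointPaths {V : Type*} (G : SimpleGraph V) (s t : V) : Prop :=
  ∃ p q : G.Walk s t, p.IsPath ∧ q.IsPath ∧
    ∀ v, v ∈ p.support → v ∈ q.support → v = s ∨ v = t

set_option linter.unusedSectionVars false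
set_option maxHeartbeats 1000000

section Helpers
variable {V : Type*} [DecidableEq V]


/-- membership in edge of walk implies membership in support -/
lemma memSupp {G : SimpleGraph V} {u v a : V} {w : G.Walk u v} {e : Sym2 V}
    (he : e ∈ w.edges) (ha : a ∈ e) : a ∈ w.support := by
  induction e with
  | h x y =>
    rcases Sym2.mem_iff.mp ha with rfl | rfl
    · exact w.fst_mem_support_of_mem_edges he
    · exact w.snd_mem_support_of_mem_edges he

/-- a path containing the edge between its endpoints is a single edge -/
lemma pathEdgeSingleton {G : SimpleGraph V} {u w : V} (B : G.Walk u w) (hB : B.IsPath)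
    (he : s(u, w) ∈ B.edges) : B.edges = [s(u, w)] := by
  cases B with
  | nil => simp at he
  | cons h B' =>
    rename_i x
    rw [Walk.cons_isPath_iff] at hB
    by_cases hxw : x = w
    · subst hxw
      have : B' = Walk.nil := Walk.isPath_iff_eq_nil.mp hB.1
      subst this; simp
    · exfalso
      rw [Walk.edges_cons, List.mem_cons] at he
      rcases he with he | he
      · rw [Sym2.eq_iff] at he
        rcases he with ⟨_, h2⟩ | ⟨h1, h2⟩
        · exact hxw h2.symm
        · exact (G.ne_of_adj h h1).elim
      · exact hB.2 (memSupp he (Sym2.mem_mk_left u w))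

/-- head edge count: a path from a to b with a ≠ b has exactly one edge at a -/
lemma headCount {G : SimpleGraph V} {a b : V} (w : G.Walk a b) (hw : w.IsPath) (hab : a ≠ b) :
    (w.edges.filter (fun e => a ∈ e)).length = 1 := by
  cases w with
  | nil => exact absurd rfl hab
  | cons h w' =>
    rw [Walk.cons_isPath_iff] at hw
    rw [Walk.edges_cons, List.filter_cons]
    have h1 : w'.edges.filter (fun e => a ∈ e) = [] := by
      rw [List.filter_eq_nil_iff]
      intro e he
      simp only [decide_eq_true_eq]
      intro ha
      exact hw.2 (memSupp he ha)
    simp [h1, Sym2.mem_mk_left]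

/-- internal vertex count: exactly two edges at an internal vertex of a path -/
lemma internalCount {G : SimpleGraph V} {a b v : V} (w : G.Walk a b) (hw : w.IsPath)
    (hv : v ∈ w.support) (hva : v ≠ a) (hvb : v ≠ b) :
    (w.edges.filter (fun e => v ∈ e)).length = 2 := by
  induction w with
  | nil => simp at hv; exact absurd hv hva
  | @cons u x b h w' ih =>
    rw [Walk.cons_isPath_iff] at hw
    rw [Walk.support_cons, List.mem_cons] at hv
    rcases hv with rfl | hv
    · exact absurd rfl hva
    rw [Walk.edges_cons, List.filter_cons]
    by_cases hvx : v = x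
    · subst hvx
      have hm : v ∈ s(u, v) := Sym2.mem_mk_right u v
      rw [if_pos (by simp [hm]), List.length_cons, headCount w' hw.1 hvb]
    · have : v ∉ s(u, x) := by
        rw [Sym2.mem_iff]; push_neg; exact ⟨hva, hvx⟩
      rw [if_neg (by simpa using this)]
      exact ih hw.1 hv hvx hvb


/-- extract the first F-segment of a walk starting off S -/
lemma segExtract {H : SimpleGraph V} {F : Finset (Sym2 V)} {S : List V}
    (hedge : ∀ x y : V, H.Adj x y → s(x, y) ∉ F → x ∈ S ∧ y ∈ S) :
    ∀ {c b : V} (w : H.Walk c b), c ∉ S → b ∈ S →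
    ∃ (d : V) (segH : H.Walk c d) (rest : H.Walk d b),
      d ∈ S ∧ w = segH.append rest ∧ (∀ e ∈ segH.edges, e ∈ F) ∧
      (∀ x ∈ segH.support, x ≠ d → x ∉ S) := by
  intro c b w
  induction w with
  | nil => intro hc hb; exact absurd hb hc
  | @cons c c' b h w' ih =>
    intro hc hb
    have hf : s(c, c') ∈ F := by
      by_contra hf
      exact hc (hedge _ _ h hf).1
    by_cases hc' : c' ∈ S
    · refine ⟨c', Walk.cons h Walk.nil, w', hc', by simp, ?_, ?_⟩
      · intro e he
        simp only [Walk.edges_cons, Walk.edges_nil, List.mem_singleton] at he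
        subst he; exact hf
      · intro x hx hxd
        have hx2 : x = c ∨ x = c' := by simpa using hx
        rcases hx2 with rfl | rfl
        · exact hc
        · exact absurd rfl hxd
    · obtain ⟨d, segH', rest, hd, heq, hF', hS'⟩ := ih hc' hb
      refine ⟨d, Walk.cons h segH', rest, hd, by rw [Walk.cons_append, ← heq], ?_, ?_⟩
      · intro e he
        rcases List.mem_cons.mp (by simpa using he) with rfl | he'
        · exact hf
        · exact hF' e he'
      · intro x hx hxd
        rcases List.mem_cons.mp (by simpa using hx) with rfl | hx'
        · exact hc
        · exact hS' x hx' hxd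

/-- decomposition of a path with endpoints in S into attachment segments -/
lemma decompose {H : SimpleGraph V} {F : Finset (Sym2 V)} {S : List V}
    (hedge : ∀ x y : V, H.Adj x y → s(x, y) ∉ F → x ∈ S ∧ y ∈ S)
    (hsub : ∀ x y : V, H.Adj x y → s(x, y) ∈ F → (fromEdgeSet (↑F : Set (Sym2 V))).Adj x y) :
    ∀ (n : ℕ) {a b : V} (w : H.Walk a b), w.length ≤ n → w.IsPath → a ∈ S → b ∈ S →
    ∃ L : List ((u : V) × (v : V) × (fromEdgeSet (↑F : Set (Sym2 V))).Walk u v),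
      (∀ s ∈ L, s.2.2.IsPath ∧ s.1 ∈ S ∧ s.2.1 ∈ S ∧
        ∀ x ∈ s.2.2.support, x ≠ s.1 → x ≠ s.2.1 → x ∉ S) ∧
      L.Pairwise (fun s s' => ∀ e ∈ s.2.2.edges, e ∉ s'.2.2.edges) ∧
      (∀ s ∈ L, ∀ e ∈ s.2.2.edges, e ∈ w.edges ∧ e ∈ F) ∧
      (∀ e ∈ F, e ∈ w.edges → ∃ s ∈ L, e ∈ s.2.2.edges) := by
  intro n
  induction n with
  | zero =>
    intro a b w hlen _ _ _
    cases w with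
    | nil => exact ⟨[], by simp, by simp, by simp, by simp⟩
    | cons h w' => simp at hlen
  | succ n ih =>
    intro a b w hlen hw ha hb
    cases w with
    | nil => exact ⟨[], by simp, by simp, by simp, by simp⟩
    | @cons a c b h w' =>
      have hw' : w'.IsPath := hw.of_cons
      have hnodup : (Walk.cons h w').edges.Nodup := hw.isTrail.edges_nodup
      by_cases hf : s(a, c) ∈ F
      · by_cases hcS : c ∈ S
        · -- single edge segment
          have hadj : (fromEdgeSet (↑F : Set (Sym2 V))).Adj a c := hsub _ _ h hf
          obtain ⟨L, hL1, hL2, hL3, hL4⟩ := ih w' (by simpa using hlen) hw' hcS hb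
          refine ⟨⟨a, c, Walk.cons hadj Walk.nil⟩ :: L, ?_, ?_, ?_, ?_⟩
          · intro s hs
            rcases List.mem_cons.mp hs with rfl | hs
            · refine ⟨by simp [hadj.ne], ha, hcS, ?_⟩
              intro x hx hxa hxc
              have : x = a ∨ x = c := by simpa using hx
              rcases this with rfl | rfl
              · exact absurd rfl hxa
              · exact absurd rfl hxc
            · exact hL1 s hs
          · rw [List.pairwise_cons]
            refine ⟨?_, hL2⟩
            intro s' hs' e he
            have he' : e = s(a, c) := by simpa using he
            subst he'
            intro hmem
            have : s(a, c) ∈ w'.edges := (hL3 s' hs' _ hmem).1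
            rw [Walk.edges_cons, List.nodup_cons] at hnodup
            exact hnodup.1 this
          · intro s hs e he
            rcases List.mem_cons.mp hs with rfl | hs
            · have he' : e = s(a, c) := by simpa using he
              subst he'
              exact ⟨by simp, hf⟩
            · obtain ⟨h1, h2⟩ := hL3 s hs e he
              exact ⟨by simp [h1], h2⟩
          · intro e heF hew
            rcases List.mem_cons.mp (by simpa using hew) with rfl | hew'
            · exact ⟨⟨a, c, Walk.cons hadj Walk.nil⟩, List.mem_cons_self, by simp⟩
            · obtain ⟨s, hs, hse⟩ := hL4 e heF hew'
              exact ⟨s, List.mem_cons_of_mem _ hs, hse⟩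
        · -- long segment: extract
          obtain ⟨d, segH, rest, hd, heq, hsegF, hsegS⟩ := segExtract hedge w' hcS hb
          have hconseq : Walk.cons h w' = (Walk.cons h segH).append rest := by
            rw [heq, Walk.cons_append]
          have hsegpath : (Walk.cons h segH).IsPath := by
            rw [hconseq] at hw; exact hw.of_append_left
          have hsegFall : ∀ e ∈ (Walk.cons h segH).edges, e ∈ F := by
            intro e he
            rcases List.mem_cons.mp (by simpa using he) with rfl | he'
            · exact hf
            · exact hsegF e he'
          have htrans : ∀ e ∈ (Walk.cons h segH).edges,
              e ∈ (fromEdgeSet (↑F : Set (Sym2 V))).edgeSet := by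
            intro e he
            rw [edgeSet_fromEdgeSet]
            exact ⟨hsegFall e he,
              H.not_isDiag_of_mem_edgeSet ((Walk.cons h segH).edges_subset_edgeSet he)⟩
          have hrestlen : rest.length ≤ n := by
            have hlw := congrArg Walk.length heq
            rw [Walk.length_append] at hlw
            simp only [Walk.length_cons] at hlen
            omega
          have hrestpath : rest.IsPath := by
            rw [heq] at hw'; exact hw'.of_append_right
          have hedgesplit : (Walk.cons h w').edges
              = (Walk.cons h segH).edges ++ rest.edges := by
            rw [hconseq, Walk.edges_append]
          have hdisj2 : ∀ e ∈ (Walk.cons h segH).edges, e ∉ rest.edges := by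
            have hnd := hnodup
            rw [hedgesplit, List.nodup_append] at hnd
            exact fun e he hr => hnd.2.2 e he e hr rfl
          obtain ⟨L, hL1, hL2, hL3, hL4⟩ := ih rest hrestlen hrestpath hd hb
          refine ⟨⟨a, d, (Walk.cons h segH).transfer _ htrans⟩ :: L, ?_, ?_, ?_, ?_⟩
          · intro s hs
            rcases List.mem_cons.mp hs with rfl | hs
            · refine ⟨hsegpath.transfer htrans, ha, hd, ?_⟩
              intro x hx hxa hxd
              rw [Walk.support_transfer] at hx
              rcases List.mem_cons.mp (by simpa using hx) with rfl | hx'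
              · exact absurd rfl hxa
              · exact hsegS x hx' hxd
            · exact hL1 s hs
          · rw [List.pairwise_cons]
            refine ⟨?_, hL2⟩
            intro s' hs' e he
            rw [Walk.edges_transfer] at he
            intro hmem
            exact hdisj2 e he (hL3 s' hs' e hmem).1
          · intro s hs e he
            rcases List.mem_cons.mp hs with rfl | hs
            · rw [Walk.edges_transfer] at he
              refine ⟨?_, hsegFall e he⟩
              rw [hedgesplit]
              exact List.mem_append_left _ he
            · obtain ⟨h1, h2⟩ := hL3 s hs e he
              refine ⟨?_, h2⟩
              rw [hedgesplit]
              exact List.mem_append_right _ h1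
          · intro e heF hew
            rw [hedgesplit] at hew
            rcases List.mem_append.mp hew with hew | hew
            · refine ⟨_, List.mem_cons_self, ?_⟩
              rw [Walk.edges_transfer]
              exact hew
            · obtain ⟨s, hs, hse⟩ := hL4 e heF hew
              exact ⟨s, List.mem_cons_of_mem _ hs, hse⟩
      · -- P-edge: skip
        have hacS := hedge _ _ h hf
        obtain ⟨L, hL1, hL2, hL3, hL4⟩ := ih w' (by simpa using hlen) hw' hacS.2 hb
        refine ⟨L, hL1, hL2, ?_, ?_⟩
        · intro s hs e he
          obtain ⟨h1, h2⟩ := hL3 s hs e he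
          exact ⟨by simp [h1], h2⟩
        · intro e heF hew
          rcases List.mem_cons.mp (by simpa using hew) with rfl | hew'
          · exact absurd heF hf
          · exact hL4 e heF hew'

end Helpers

/-- If `P` is an `s`-`t` path and `F ⊆ E \ E(P)` is inclusion-minimal such that `P ∪ F`
contains two internally disjoint `s`-`t` paths, then every node `v ∉ V(P)` has degree `0`
or `2` in `F`, and `F` partitions into attachment paths (paths with both endpoints on `P`
and no internal node on `P`, pairwise edge-disjoint, whose union of edges is `F`). -/
theorem stmt1 {V : Type*} [DecidableEq V] (G : SimpleGraph V) (s t : V)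
    (P : G.Walk s t) (hP : P.IsPath)
    (F : Finset (Sym2 V)) (hFE : ↑F ⊆ G.edgeSet) (hdisj : ∀ e ∈ F, e ∉ P.edges)
    (hF : TwoDisjointPaths (fromEdgeSet ((↑F : Set (Sym2 V)) ∪ {e | e ∈ P.edges})) s t)
    (hmin : ∀ F' ⊂ F,
      ¬ TwoDisjointPaths (fromEdgeSet ((↑F' : Set (Sym2 V)) ∪ {e | e ∈ P.edges})) s t) :
    (∀ v, v ∉ P.support →
      (F.filter (fun e => v ∈ e)).card = 0 ∨ (F.filter (fun e => v ∈ e)).card = 2) ∧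
    ∃ (k : ℕ) (u w : Fin k → V)
      (Q : ∀ m : Fin k, (fromEdgeSet (↑F : Set (Sym2 V))).Walk (u m) (w m)),
      (∀ m, (Q m).IsPath ∧ u m ∈ P.support ∧ w m ∈ P.support ∧
        ∀ x ∈ (Q m).support, x ≠ u m → x ≠ w m → x ∉ P.support) ∧
      (∀ m m', m ≠ m' → ∀ e ∈ (Q m).edges, e ∉ (Q m').edges) ∧
      (∀ e, e ∈ F ↔ ∃ m, e ∈ (Q m).edges) := by
  classical
  set H := fromEdgeSet ((↑F : Set (Sym2 V)) ∪ {e | e ∈ P.edges}) with hH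
  obtain ⟨p, q, hp, hq, hpq⟩ := hF
  -- edges of H are in F or P.edges
  have hHedge : ∀ e ∈ H.edgeSet, e ∈ F ∨ e ∈ P.edges := by
    intro e he
    rw [hH, edgeSet_fromEdgeSet] at he
    rcases he.1 with h | h
    · exact Or.inl h
    · exact Or.inr h
  have hsmem : s ∈ P.support := P.start_mem_support
  have htmem : t ∈ P.support := P.end_mem_support
  -- minimality: every F edge is used by p or q
  have hFpq : ∀ e ∈ F, e ∈ p.edges ∨ e ∈ q.edges := by
    by_contra hcon
    push_neg at hcon
    obtain ⟨e₀, he₀F, he₀p, he₀q⟩ := hcon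
    set F' : Finset (Sym2 V) := F.filter (fun e => e ∈ p.edges ∨ e ∈ q.edges) with hF'
    have hss : F' ⊂ F := by
      refine (Finset.ssubset_iff_of_subset (Finset.filter_subset _ _)).mpr ⟨e₀, he₀F, ?_⟩
      simp only [hF', Finset.mem_filter]
      push_neg
      exact fun _ => ⟨he₀p, he₀q⟩
    apply hmin F' hss
    have htr : ∀ (r : H.Walk s t), r.IsPath → (∀ e ∈ F, e ∈ r.edges → e ∈ F') →
        ∀ e ∈ r.edges, e ∈ (fromEdgeSet ((↑F' : Set (Sym2 V)) ∪ {e | e ∈ P.edges})).edgeSet := by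
      intro r _ hr e he
      have heH : e ∈ H.edgeSet := r.edges_subset_edgeSet he
      rw [edgeSet_fromEdgeSet]
      refine ⟨?_, H.not_isDiag_of_mem_edgeSet heH⟩
      rcases hHedge e heH with h | h
      · exact Or.inl (by exact_mod_cast hr e h he)
      · exact Or.inr h
    have hclp : ∀ e ∈ F, e ∈ p.edges → e ∈ F' := by
      intro e heF hep; simp only [hF', Finset.mem_filter]; exact ⟨heF, Or.inl hep⟩
    have hclq : ∀ e ∈ F, e ∈ q.edges → e ∈ F' := by
      intro e heF heq; simp only [hF', Finset.mem_filter]; exact ⟨heF, Or.inr heq⟩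
    refine ⟨p.transfer _ (htr p hp hclp), q.transfer _ (htr q hq hclq),
      hp.transfer _, hq.transfer _, ?_⟩
    intro v hv1 hv2
    rw [Walk.support_transfer] at hv1 hv2
    exact hpq v hv1 hv2
  constructor
  · -- degree claim
    intro v hv
    have hvs : v ≠ s := fun h => hv (h ▸ hsmem)
    have hvt : v ≠ t := fun h => hv (h ▸ htmem)
    have key : ∀ (r o : H.Walk s t), r.IsPath →
        (∀ x, x ∈ r.support → x ∈ o.support → x = s ∨ x = t) →
        (∀ e ∈ F, e ∈ r.edges ∨ e ∈ o.edges) → v ∈ r.support →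
        (F.filter (fun e => v ∈ e)).card = 2 := by
      intro r o hr hdj hcov hvr
      have hvo : v ∉ o.support := by
        intro h'
        rcases hdj v hvr h' with rfl | rfl
        · exact hvs rfl
        · exact hvt rfl
      have hset : F.filter (fun e => v ∈ e) = (r.edges.filter (fun e => v ∈ e)).toFinset := by
        ext e
        rw [Finset.mem_filter, List.mem_toFinset, List.mem_filter]
        constructor
        · rintro ⟨heF, hve⟩
          rcases hcov e heF with h | h
          · exact ⟨h, by simpa using hve⟩
          · exact absurd (memSupp h hve) hvo
        · rintro ⟨her, hve⟩
          have hve' : v ∈ e := by simpa using hve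
          have heH : e ∈ H.edgeSet := r.edges_subset_edgeSet her
          rcases hHedge e heH with h | h
          · exact ⟨h, by simpa using hve'⟩
          · exact absurd (memSupp h hve') hv
      rw [hset, List.toFinset_card_of_nodup (hr.isTrail.edges_nodup.filter _)]
      exact internalCount r hr hvr hvs hvt
    by_cases hvp : v ∈ p.support
    · exact Or.inr (key p q hp hpq hFpq hvp)
    by_cases hvq : v ∈ q.support
    · refine Or.inr (key q p hq (fun x h1 h2 => hpq x h2 h1)
        (fun e he => (hFpq e he).symm) hvq)
    · left
      rw [Finset.card_eq_zero, Finset.filter_eq_empty_iff]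
      intro e heF hve
      have hve' : v ∈ e := by simpa using hve
      rcases hFpq e heF with h | h
      · exact hvp (memSupp h hve')
      · exact hvq (memSupp h hve')
  · -- decomposition
    have hedge : ∀ x y : V, H.Adj x y → s(x, y) ∉ F → x ∈ P.support ∧ y ∈ P.support := by
      intro x y hxy hne
      rw [hH, fromEdgeSet_adj] at hxy
      rcases hxy.1 with h | h
      · exact absurd h hne
      · exact ⟨P.fst_mem_support_of_mem_edges h, P.snd_mem_support_of_mem_edges h⟩
    have hsub : ∀ x y : V, H.Adj x y → s(x, y) ∈ F →
        (fromEdgeSet (↑F : Set (Sym2 V))).Adj x y := by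
      intro x y hxy hmem
      rw [fromEdgeSet_adj]
      exact ⟨hmem, hxy.ne⟩
    obtain ⟨Lp, hLp1, hLp2, hLp3, hLp4⟩ :=
      decompose hedge hsub p.length p le_rfl hp hsmem htmem
    obtain ⟨Lq, hLq1, hLq2, hLq3, hLq4⟩ :=
      decompose hedge hsub q.length q le_rfl hq hsmem htmem
    -- shared-edge lemma
    have hshared : ∀ B ∈ Lq, ∀ e' ∈ B.2.2.edges, e' ∈ p.edges →
        ∀ e'' ∈ B.2.2.edges, e'' = e' := by
      intro B hB e' he'B he'p
      obtain ⟨hBpath, hBu, hBw, hBint⟩ := hLq1 B hB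
      obtain ⟨he'q, he'F⟩ := hLq3 B hB e' he'B
      induction e' using Sym2.ind with
      | _ x y =>
        have hxy : x ≠ y := by
          intro h
          exact H.not_isDiag_of_mem_edgeSet (q.edges_subset_edgeSet he'q) (by simp [h])
        have hxB : x ∈ B.2.2.support := memSupp he'B (Sym2.mem_mk_left x y)
        have hyB : y ∈ B.2.2.support := memSupp he'B (Sym2.mem_mk_right x y)
        have hxP : x ∈ P.support := by
          rcases hpq x (p.fst_mem_support_of_mem_edges he'p)
            (q.fst_mem_support_of_mem_edges he'q) with rfl | rfl
          · exact hsmem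
          · exact htmem
        have hyP : y ∈ P.support := by
          rcases hpq y (p.snd_mem_support_of_mem_edges he'p)
            (q.snd_mem_support_of_mem_edges he'q) with rfl | rfl
          · exact hsmem
          · exact htmem
        have hxuw : x = B.1 ∨ x = B.2.1 := by
          by_contra hcon
          push_neg at hcon
          exact hBint x hxB hcon.1 hcon.2 hxP
        have hyuw : y = B.1 ∨ y = B.2.1 := by
          by_contra hcon
          push_neg at hcon
          exact hBint y hyB hcon.1 hcon.2 hyP
        have heq : s(x, y) = s(B.1, B.2.1) := by
          rcases hxuw with hx | hx <;> rcases hyuw with hy | hy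
          · exact absurd (hx.trans hy.symm) hxy
          · rw [hx, hy]
          · rw [hx, hy, Sym2.eq_swap]
          · exact absurd (hx.trans hy.symm) hxy
        have := pathEdgeSingleton B.2.2 hBpath (heq ▸ he'B)
        intro e'' he''
        rw [this] at he''
        simpa [heq] using he''
    -- filtered Lq
    set Lq' := Lq.filter (fun s => decide (∀ e ∈ s.2.2.edges, e ∉ p.edges)) with hLq'
    have hLq'mem : ∀ B ∈ Lq', B ∈ Lq ∧ ∀ e ∈ B.2.2.edges, e ∉ p.edges := by
      intro B hB
      rw [hLq', List.mem_filter] at hB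
      exact ⟨hB.1, by simpa using hB.2⟩
    set L := Lp ++ Lq' with hL
    have hLmem : ∀ s ∈ L, s ∈ Lp ∨ s ∈ Lq := by
      intro s hs
      rcases List.mem_append.mp hs with h | h
      · exact Or.inl h
      · exact Or.inr (hLq'mem s h).1
    have hL1 : ∀ s ∈ L, s.2.2.IsPath ∧ s.1 ∈ P.support ∧ s.2.1 ∈ P.support ∧
        ∀ x ∈ s.2.2.support, x ≠ s.1 → x ≠ s.2.1 → x ∉ P.support := by
      intro s hs
      rcases hLmem s hs with h | h
      · exact hLp1 s h
      · exact hLq1 s h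
    have hL3 : ∀ s ∈ L, ∀ e ∈ s.2.2.edges, e ∈ F := by
      intro s hs e he
      rcases hLmem s hs with h | h
      · exact (hLp3 s h e he).2
      · exact (hLq3 s h e he).2
    have hPW : L.Pairwise (fun s s' => ∀ e ∈ s.2.2.edges, e ∉ s'.2.2.edges) := by
      rw [hL, List.pairwise_append]
      refine ⟨hLp2, hLq2.sublist List.filter_sublist, ?_⟩
      intro A hA B hB e heA
      exact fun heB => (hLq'mem B hB).2 e heB (hLp3 A hA e heA).1
    have hcover : ∀ e ∈ F, ∃ s ∈ L, e ∈ s.2.2.edges := by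
      intro e heF
      by_cases hep : e ∈ p.edges
      · obtain ⟨s, hs, hse⟩ := hLp4 e heF hep
        exact ⟨s, List.mem_append_left _ hs, hse⟩
      · rcases hFpq e heF with h | h
        · exact absurd h hep
        obtain ⟨B, hB, hBe⟩ := hLq4 e heF h
        have hBin : B ∈ Lq' := by
          rw [hLq', List.mem_filter]
          refine ⟨hB, ?_⟩
          simp only [decide_eq_true_eq]
          intro e'' he'' he''p
          exact hep ((hshared B hB e'' he'' he''p e hBe) ▸ he''p)
        exact ⟨B, List.mem_append_right _ hBin, hBe⟩
    refine ⟨L.length, fun m => (L.get m).1, fun m => (L.get m).2.1,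
      fun m => (L.get m).2.2, ?_, ?_, ?_⟩
    · intro m
      exact hL1 (L.get m) (L.get_mem m)
    · intro m m' hmm e he hmem
      rcases Ne.lt_or_gt hmm with hlt | hlt
      · exact (List.pairwise_iff_get.mp hPW m m' hlt) e he hmem
      · exact (List.pairwise_iff_get.mp hPW m' m hlt) e hmem he
    · intro e
      constructor
      · intro heF
        obtain ⟨sg, hsg, hse⟩ := hcover e heF
        obtain ⟨m, hm⟩ := List.mem_iff_get.mp hsg
        refine ⟨m, ?_⟩
        show e ∈ (L.get m).2.2.edges
        rw [hm]; exact hse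
      · rintro ⟨m, hm⟩
        exact hL3 (L.get m) (L.get_mem m) e hm
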